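/- Let F : ℝ → ℝ be of class C² with F(0) = F'(0) = 0 and F''(0) ≥ 0. Then for any q > 2√(F''(0)) and any T > 0 satisfying (q − √(q² − 4F''(0)))/2 < π²/T² < (q + √(q² − 4F''(0)))/2, there exists a C² function u : [0,T] → ℝ with u'(0) = u'(T) = 0 such that J_q(u) < 0; in particular inf{ J_q(u) : u ∈ A_T } < 0. -/

import Mathlib

set_option maxHeartbeats 1000000


open Real intervalIntegral Set

/-- Let `F` be `C²` with `F(0) = F'(0) = 0` and `F''(0) ≥ 0`. For any
`q > 2√(F''(0))` and any `T > 0` with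
`(q − √(q² − 4F''(0)))/2 < π²/T² < (q + √(q² − 4F''(0)))/2`, there exists a `C²`
function `u` with `u'(0) = u'(T) = 0` and `J_q(u) < 0`; in particular
`inf { J_q(u) : u ∈ A_T } < 0`. -/
lemma taylor_bd (F : ℝ → ℝ) (hF : ContDiff ℝ 2 F) (hF0 : F 0 = 0) (hF1 : deriv F 0 = 0)
    (hF2 : 0 ≤ iteratedDeriv 2 F 0) {δ : ℝ} (hδ : 0 < δ) :
    ∃ r > 0, ∀ t : ℝ, |t| ≤ r → F t ≤ (iteratedDeriv 2 F 0 / 2 + δ) * t ^ 2 := by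
  set c := iteratedDeriv 2 F 0 with hc
  have hFd : Differentiable ℝ F := hF.differentiable (by norm_num)
  have hdF : Differentiable ℝ (deriv F) := by
    have := hF.differentiable_iteratedDeriv 1 (by norm_num)
    rwa [iteratedDeriv_one] at this
  have hF'' : ∀ x : ℝ, HasDerivAt (deriv F) (iteratedDeriv 2 F x) x := by
    intro x
    have h : iteratedDeriv 2 F = deriv (deriv F) := by
      rw [show (2:ℕ) = 1 + 1 from rfl, iteratedDeriv_succ, iteratedDeriv_one]
    rw [h]
    exact (hdF x).hasDerivAt
  have hcontF' : Continuous (deriv F) := hdF.continuous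
  obtain ⟨r, hr, hball⟩ : ∃ r > 0, ∀ y : ℝ, |y| ≤ r → |iteratedDeriv 2 F y - c| ≤ δ := by
    have hcont : Continuous (iteratedDeriv 2 F) := hF.continuous_iteratedDeriv 2 (le_refl _)
    obtain ⟨ρ, hρ, hρ'⟩ := Metric.continuousAt_iff.mp hcont.continuousAt δ hδ
    refine ⟨ρ / 2, by linarith, fun y hy => ?_⟩
    have : dist y 0 < ρ := by rw [Real.dist_eq, sub_zero]; linarith
    exact le_of_lt (by simpa [Real.dist_eq] using hρ' this)
  have hbd : ∀ ξ : ℝ, |ξ| ≤ r → |iteratedDeriv 2 F ξ| ≤ c + δ := by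
    intro ξ hξ
    have h1 := hball ξ hξ
    have h2 := abs_sub_abs_le_abs_sub (iteratedDeriv 2 F ξ) c
    rw [abs_of_nonneg hF2] at h2
    linarith
  -- step A : bound on deriv F
  have stepA : ∀ s : ℝ, |s| ≤ r → |deriv F s| ≤ (c + δ) * |s| := by
    intro s hs
    rcases lt_trichotomy s 0 with h | h | h
    · obtain ⟨ξ, hξ, hval⟩ := exists_hasDerivAt_eq_slope (deriv F) (iteratedDeriv 2 F) h
        hcontF'.continuousOn (fun x _ => hF'' x)
      rw [hF1] at hval
      have hξr : |ξ| ≤ r := by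
        rw [abs_le] at hs ⊢
        constructor <;> [linarith [hξ.1]; linarith [hξ.2]]
      have : deriv F s = iteratedDeriv 2 F ξ * s := by
        field_simp at hval
        have hval' : deriv F s = iteratedDeriv 2 F ξ * s := by linear_combination hval
        linarith
      rw [this, abs_mul]
      exact mul_le_mul_of_nonneg_right (hbd ξ hξr) (abs_nonneg s)
    · simp [h, hF1]
    · obtain ⟨ξ, hξ, hval⟩ := exists_hasDerivAt_eq_slope (deriv F) (iteratedDeriv 2 F) h
        hcontF'.continuousOn (fun x _ => hF'' x)
      rw [hF1] at hval
      have hξr : |ξ| ≤ r := by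
        rw [abs_le] at hs ⊢
        constructor <;> [linarith [hξ.1]; linarith [hξ.2]]
      have : deriv F s = iteratedDeriv 2 F ξ * s := by
        field_simp at hval
        linarith
      rw [this, abs_mul]
      exact mul_le_mul_of_nonneg_right (hbd ξ hξr) (abs_nonneg s)
  -- step B
  refine ⟨r, hr, fun t ht => ?_⟩
  have key : |F t| ≤ (c + δ) / 2 * t ^ 2 := by
    rcases lt_trichotomy t 0 with h | h | h
    · obtain ⟨ξ, hξ, hval⟩ := exists_ratio_hasDerivAt_eq_ratio_slope F (deriv F)
        h hFd.continuous.continuousOn (fun x _ => (hFd x).hasDerivAt)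
        (fun x => x ^ 2) (fun x => 2 * x) (by fun_prop)
        (fun x _ => by simpa using (hasDerivAt_pow 2 x))
      -- (0^2 - t^2) * deriv F ξ = (F 0 - F t) * (2 ξ)
      rw [hF0] at hval
      have heq : F t * (2 * ξ) = t ^ 2 * deriv F ξ := by ring_nf at hval ⊢; linarith
      have hξr : |ξ| ≤ r := by
        rw [abs_le] at ht ⊢
        constructor <;> [linarith [hξ.1]; linarith [hξ.2]]
      have hξpos : 0 < |ξ| := abs_pos.mpr (ne_of_lt hξ.2)
      have hA := stepA ξ hξr
      have habs : |F t| * (2 * |ξ|) = t ^ 2 * |deriv F ξ| := by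
        have := congrArg abs heq
        rw [abs_mul, abs_mul, abs_mul] at this
        simpa [abs_of_nonneg (sq_nonneg t), abs_of_nonneg (by norm_num : (0:ℝ) ≤ 2),
          sq_abs] using this
      have hb : t ^ 2 * |deriv F ξ| ≤ t ^ 2 * ((c + δ) * |ξ|) :=
        mul_le_mul_of_nonneg_left hA (sq_nonneg t)
      nlinarith [hξpos, habs, hb]
    · simp [h, hF0]
    · obtain ⟨ξ, hξ, hval⟩ := exists_ratio_hasDerivAt_eq_ratio_slope F (deriv F)
        h hFd.continuous.continuousOn (fun x _ => (hFd x).hasDerivAt)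
        (fun x => x ^ 2) (fun x => 2 * x) (by fun_prop)
        (fun x _ => by simpa using (hasDerivAt_pow 2 x))
      rw [hF0] at hval
      have heq : F t * (2 * ξ) = t ^ 2 * deriv F ξ := by ring_nf at hval ⊢; linarith
      have hξr : |ξ| ≤ r := by
        rw [abs_le] at ht ⊢
        constructor <;> [linarith [hξ.1]; linarith [hξ.2]]
      have hξpos : 0 < |ξ| := abs_pos.mpr (ne_of_gt hξ.1)
      have hA := stepA ξ hξr
      have habs : |F t| * (2 * |ξ|) = t ^ 2 * |deriv F ξ| := by
        have := congrArg abs heq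
        rw [abs_mul, abs_mul, abs_mul] at this
        simpa [abs_of_nonneg (sq_nonneg t), abs_of_nonneg (by norm_num : (0:ℝ) ≤ 2),
          sq_abs] using this
      have hb : t ^ 2 * |deriv F ξ| ≤ t ^ 2 * ((c + δ) * |ξ|) :=
        mul_le_mul_of_nonneg_left hA (sq_nonneg t)
      nlinarith [hξpos, habs, hb]
  have := le_abs_self (F t)
  nlinarith [sq_nonneg t]

theorem stmt13 (F : ℝ → ℝ) (hF : ContDiff ℝ 2 F)
    (hF0 : F 0 = 0) (hF1 : deriv F 0 = 0) (hF2 : 0 ≤ iteratedDeriv 2 F 0)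
    (q : ℝ) (hq : 2 * Real.sqrt (iteratedDeriv 2 F 0) < q)
    (T : ℝ) (hT : 0 < T)
    (hT1 : (q - Real.sqrt (q ^ 2 - 4 * iteratedDeriv 2 F 0)) / 2 < π ^ 2 / T ^ 2)
    (hT2 : π ^ 2 / T ^ 2 < (q + Real.sqrt (q ^ 2 - 4 * iteratedDeriv 2 F 0)) / 2) :
    ∃ u : ℝ → ℝ, ContDiff ℝ 2 u ∧ deriv u 0 = 0 ∧ deriv u T = 0 ∧
      (∫ x in (0:ℝ)..T,
        ((iteratedDeriv 2 u x) ^ 2 / 2 - q * (deriv u x) ^ 2 / 2 + F (u x))) < 0 := by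
  set c := iteratedDeriv 2 F 0 with hc
  set ω : ℝ := π / T with hω
  have hπ : (0:ℝ) < π := Real.pi_pos
  have hωpos : 0 < ω := div_pos hπ hT
  have hωne : ω ≠ 0 := ne_of_gt hωpos
  have hωT : ω * T = π := by rw [hω]; field_simp
  have hω2 : ω ^ 2 = π ^ 2 / T ^ 2 := by rw [hω]; ring
  -- the key sign condition
  have hA : ω ^ 4 - q * ω ^ 2 + c < 0 := by
    have hs0 : 0 ≤ q ^ 2 - 4 * c := by
      nlinarith [Real.sq_sqrt hF2, Real.sqrt_nonneg c]
    have hs2 : Real.sqrt (q ^ 2 - 4 * c) ^ 2 = q ^ 2 - 4 * c := Real.sq_sqrt hs0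
    rw [← hω2] at hT1 hT2
    nlinarith [hT1, hT2, hs2]
  set δ : ℝ := (q * ω ^ 2 - ω ^ 4 - c) / 4 with hδdef
  have hδ : 0 < δ := by rw [hδdef]; linarith
  obtain ⟨r, hr, hbd⟩ := taylor_bd F hF hF0 hF1 hF2 hδ
  set ε : ℝ := r with hε
  have hderiv : ∀ x : ℝ, HasDerivAt (fun x => ε * Real.cos (ω * x))
      (-(ε * ω) * Real.sin (ω * x)) x := by
    intro x
    have h1 : HasDerivAt (fun x : ℝ => ω * x) ω x := by
      simpa using (hasDerivAt_id x).const_mul ω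
    have h2 := ((Real.hasDerivAt_cos (ω * x)).comp x h1).const_mul ε
    refine h2.congr_deriv ?_
    ring
  have hd1 : (deriv fun x => ε * Real.cos (ω * x)) = fun x => -(ε * ω) * Real.sin (ω * x) :=
    funext fun x => (hderiv x).deriv
  have hderiv2 : ∀ x : ℝ, HasDerivAt (fun x => -(ε * ω) * Real.sin (ω * x))
      (-(ε * ω ^ 2) * Real.cos (ω * x)) x := by
    intro x
    have h1 : HasDerivAt (fun x : ℝ => ω * x) ω x := by
      simpa using (hasDerivAt_id x).const_mul ω
    have h2 := ((Real.hasDerivAt_sin (ω * x)).comp x h1).const_mul (-(ε * ω))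
    refine h2.congr_deriv ?_
    ring
  have hd2 : (iteratedDeriv 2 fun x => ε * Real.cos (ω * x))
      = fun x => -(ε * ω ^ 2) * Real.cos (ω * x) := by
    rw [show (2:ℕ) = 1 + 1 from rfl, iteratedDeriv_succ, iteratedDeriv_one, hd1]
    exact funext fun x => (hderiv2 x).deriv
  refine ⟨fun x => ε * Real.cos (ω * x), ?_, ?_, ?_, ?_⟩
  · have : ContDiff ℝ 2 fun x : ℝ => Real.cos (ω * x) :=
      Real.contDiff_cos.comp (contDiff_const.mul contDiff_id)
    exact contDiff_const.mul this
  · rw [hd1]; simp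
  · rw [hd1]; simp [hωT]
  · simp only [hd1, hd2]
    -- now a concrete integral
    set a : ℝ := (ε * ω ^ 2) ^ 2 / 2 + (c / 2 + δ) * ε ^ 2 with ha
    set b : ℝ := -(q * (ε * ω) ^ 2 / 2) with hb
    have hconta : Continuous fun x : ℝ => a * Real.cos (ω * x) ^ 2 :=
      continuous_const.mul ((Real.continuous_cos.comp (continuous_const.mul continuous_id)).pow 2)
    have hcontb : Continuous fun x : ℝ => b * Real.sin (ω * x) ^ 2 :=
      continuous_const.mul ((Real.continuous_sin.comp (continuous_const.mul continuous_id)).pow 2)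
    have hcontg : Continuous fun x : ℝ =>
        (-(ε * ω ^ 2) * Real.cos (ω * x)) ^ 2 / 2 - q * (-(ε * ω) * Real.sin (ω * x)) ^ 2 / 2
          + F (ε * Real.cos (ω * x)) := by
      apply Continuous.add
      · apply Continuous.sub
        · exact ((continuous_const.mul (Real.continuous_cos.comp
            (continuous_const.mul continuous_id))).pow 2).div_const 2
        · exact (continuous_const.mul ((continuous_const.mul (Real.continuous_sin.comp
            (continuous_const.mul continuous_id))).pow 2)).div_const 2
      · exact hF.continuous.comp (continuous_const.mul (Real.continuous_cos.comp
          (continuous_const.mul continuous_id)))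
    have hle : (∫ x in (0:ℝ)..T,
        ((-(ε * ω ^ 2) * Real.cos (ω * x)) ^ 2 / 2 - q * (-(ε * ω) * Real.sin (ω * x)) ^ 2 / 2
          + F (ε * Real.cos (ω * x))))
        ≤ ∫ x in (0:ℝ)..T, (a * Real.cos (ω * x) ^ 2 + b * Real.sin (ω * x) ^ 2) := by
      apply intervalIntegral.integral_mono_on hT.le
        (hcontg.intervalIntegrable 0 T) ((hconta.add hcontb).intervalIntegrable 0 T)
      intro x _
      have habs : |ε * Real.cos (ω * x)| ≤ r := by
        rw [abs_mul, abs_of_pos (show (0:ℝ) < ε from hr)]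
        calc ε * |Real.cos (ω * x)| ≤ ε * 1 :=
              mul_le_mul_of_nonneg_left (Real.abs_cos_le_one _) hr.le
          _ = r := by rw [mul_one]
      have hFb := hbd (ε * Real.cos (ω * x)) habs
      rw [← hc] at hFb
      show _ ≤ a * Real.cos (ω * x) ^ 2 + b * Real.sin (ω * x) ^ 2
      nlinarith [hFb]
    have hcos2 : (∫ x in (0:ℝ)..T, Real.cos (ω * x) ^ 2) = T / 2 := by
      have h1 := intervalIntegral.integral_comp_mul_left (a := 0) (b := T)
        (fun y => Real.cos y ^ 2) hωne
      rw [h1, mul_zero, hωT, integral_cos_sq]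
      simp only [Real.sin_pi, Real.cos_pi, Real.sin_zero, Real.cos_zero, smul_eq_mul]
      rw [hω]
      field_simp
      ring
    have hsin2 : (∫ x in (0:ℝ)..T, Real.sin (ω * x) ^ 2) = T / 2 := by
      have h1 := intervalIntegral.integral_comp_mul_left (a := 0) (b := T)
        (fun y => Real.sin y ^ 2) hωne
      rw [h1, mul_zero, hωT, integral_sin_sq]
      simp only [Real.sin_pi, Real.cos_pi, Real.sin_zero, Real.cos_zero, smul_eq_mul]
      rw [hω]
      field_simp
      ring
    have hG : (∫ x in (0:ℝ)..T, (a * Real.cos (ω * x) ^ 2 + b * Real.sin (ω * x) ^ 2))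
        = a * (T / 2) + b * (T / 2) := by
      rw [intervalIntegral.integral_add (hconta.intervalIntegrable 0 T)
        (hcontb.intervalIntegrable 0 T), intervalIntegral.integral_const_mul,
        intervalIntegral.integral_const_mul, hcos2, hsin2]
    have hneg : a * (T / 2) + b * (T / 2) < 0 := by
      have hab : a + b = ε ^ 2 * (ω ^ 4 - q * ω ^ 2 + c) / 4 := by
        rw [ha, hb, hδdef]; ring
      have hε2 : 0 < ε ^ 2 := by positivity
      have hab0 : a + b < 0 := by
        rw [hab]
        have h3 : ε ^ 2 * (ω ^ 4 - q * ω ^ 2 + c) < 0 := mul_neg_of_pos_of_neg hε2 hA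
        linarith
      have h4 : a * (T / 2) + b * (T / 2) = (a + b) * (T / 2) := by ring
      rw [h4]
      exact mul_neg_of_neg_of_pos hab0 (by linarith)
    calc (∫ x in (0:ℝ)..T,
        ((-(ε * ω ^ 2) * Real.cos (ω * x)) ^ 2 / 2 - q * (-(ε * ω) * Real.sin (ω * x)) ^ 2 / 2
          + F (ε * Real.cos (ω * x)))) ≤ _ := hle
      _ = a * (T / 2) + b * (T / 2) := hG
      _ < 0 := hneg
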